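/- arXiv:2104.05278 — 2 statements merged into one kernel-verified Lean document; each statement's English description precedes it below -/
import Mathlib

section
/- (Sparse simultaneous control.) Let d ≥ 2 and T > 0, and let σ : ℝ → ℝ be the ReLU σ(s) = max(s,0). Let {x_i}_{i=1}^N ⊂ ℝ^d be pairwise distinct initial points and {z_i}_{i=1}^N ⊂ ℝ^d be pairwise distinct targets. Then there exist piecewise constant controls w, a : [0,T] → ℝ^d and b : [0,T] → ℝ (a total of 2d+1 scalar controls) such that for every i, the unique solution of ẋ(t) = w(t) σ(⟨a(t), x(t)⟩ + b(t)), x(0) = x_i satisfies x(T) = z_i. -/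
open MeasureTheory Set

noncomputable section

/-- The ReLU activation applied componentwise. -/
def reluVec {d : ℕ} (x : EuclideanSpace ℝ (Fin d)) : EuclideanSpace ℝ (Fin d) :=
  WithLp.toLp 2 (fun k => max (x k) 0)

/-- A matrix acting on a vector of `EuclideanSpace ℝ (Fin d)`. -/
def mvec {d : ℕ} (M : Matrix (Fin d) (Fin d) ℝ) (x : EuclideanSpace ℝ (Fin d)) :
    EuclideanSpace ℝ (Fin d) :=
  WithLp.toLp 2 (fun i => ∑ j, M i j * x j)

/-- `f` is piecewise constant on `[0,T]` with (finite) switching set `S`: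
it is constant on the pieces of `[0,T]` between consecutive points of `S`. -/
def PCOn {α : Type*} (f : ℝ → α) (T : ℝ) (S : Finset ℝ) : Prop :=
  ∀ t₁ ∈ Set.Icc (0:ℝ) T, ∀ t₂ ∈ Set.Icc (0:ℝ) T, t₁ ≤ t₂ →
    (∀ s ∈ S, s ∉ Set.Ioc t₁ t₂) → f t₁ = f t₂

/-- `x` is a solution on `[0,T]` of the neural ODE
`ẋ = W(t) σ(A(t) x + b(t))` (ReLU activation), with switching set `S`. -/
def SolvesNODE {d : ℕ} (A W : ℝ → Matrix (Fin d) (Fin d) ℝ)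
    (b : ℝ → EuclideanSpace ℝ (Fin d)) (T : ℝ) (S : Finset ℝ)
    (x : ℝ → EuclideanSpace ℝ (Fin d)) : Prop :=
  ContinuousOn x (Set.Icc 0 T) ∧
  ∀ t ∈ Set.Icc (0:ℝ) T, t ∉ S →
    HasDerivWithinAt x (mvec (W t) (reluVec (mvec (A t) (x t) + b t))) (Set.Icc 0 T) t

/-- `φ` is the time-`T` flow map of the neural ODE. -/
def IsFlowNODE {d : ℕ} (A W : ℝ → Matrix (Fin d) (Fin d) ℝ)
    (b : ℝ → EuclideanSpace ℝ (Fin d)) (T : ℝ) (S : Finset ℝ)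
    (φ : EuclideanSpace ℝ (Fin d) → EuclideanSpace ℝ (Fin d)) : Prop :=
  ∀ x₀, ∃ x, SolvesNODE A W b T S x ∧ x 0 = x₀ ∧ x T = φ x₀

/-- The operator norm of a matrix acting on Euclidean space. -/
def matOpNorm {d : ℕ} (M : Matrix (Fin d) (Fin d) ℝ) : ℝ :=
  sSup ((fun x => ‖mvec M x‖) '' Metric.closedBall (0 : EuclideanSpace ℝ (Fin d)) 1)

/-- `Γ` can be covered, for every `h ∈ (0,1)`, by at most `C h^(-D)` closed
axis-parallel cubes of side `h`. -/
def CoveredByCubes {d : ℕ} (Γ : Set (EuclideanSpace ℝ (Fin d))) (C D : ℝ) : Prop :=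
  ∀ h : ℝ, 0 < h → h < 1 →
    ∃ F : Finset (EuclideanSpace ℝ (Fin d)),
      (F.card : ℝ) ≤ C * h ^ (-D) ∧
      Γ ⊆ ⋃ c ∈ F, {x | ∀ k, c k ≤ x k ∧ x k ≤ c k + h}

namespace SparseAux

open scoped RealInnerProductSpace

variable {d N : ℕ}

/-- Reachability of configuration `z` from `x` in time `T` by the sparse neural ODE. -/
def Reach (d N : ℕ) (T : ℝ) (x z : Fin N → EuclideanSpace ℝ (Fin d)) : Prop :=
  ∃ (w a : ℝ → EuclideanSpace ℝ (Fin d)) (b : ℝ → ℝ) (S : Finset ℝ),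
    PCOn w T S ∧ PCOn a T S ∧ PCOn b T S ∧
    ∃ X : Fin N → ℝ → EuclideanSpace ℝ (Fin d),
      (∀ i, ContinuousOn (X i) (Set.Icc 0 T)) ∧
      (∀ i, ∀ t ∈ Set.Icc (0:ℝ) T, t ∉ S →
        HasDerivWithinAt (X i)
          ((max ((inner ℝ (a t) (X i t) : ℝ) + b t) 0) • w t) (Set.Icc 0 T) t) ∧
      (∀ i, X i 0 = x i) ∧
      (∀ i, X i T = z i)

lemma pcon_const {α : Type*} (c : α) (T : ℝ) (S : Finset ℝ) :
    PCOn (fun _ => c) T S := fun _ _ _ _ _ _ => rfl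

/-- Elementary shear move. -/
lemma reach_shear {T : ℝ} (hT : 0 < T) (a u : EuclideanSpace ℝ (Fin d)) (b : ℝ)
    (hau : ⟪a, u⟫ = 0) (x : Fin N → EuclideanSpace ℝ (Fin d)) :
    Reach d N T x (fun i => x i + max (⟪a, x i⟫ + b) 0 • u) := by
  refine ⟨fun _ => T⁻¹ • u, fun _ => a, fun _ => b, ∅,
    pcon_const _ _ _, pcon_const _ _ _, pcon_const _ _ _,
    fun i t => x i + (t * T⁻¹) • (max (⟪a, x i⟫ + b) 0 • u), ?_, ?_, ?_, ?_⟩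
  · intro i
    exact continuousOn_const.add ((continuousOn_id.mul continuousOn_const).smul
      continuousOn_const)
  · intro i t ht _
    have hin : ⟪a, x i + (t * T⁻¹) • (max (⟪a, x i⟫ + b) 0 • u)⟫ = ⟪a, x i⟫ := by
      rw [inner_add_right, real_inner_smul_right, real_inner_smul_right, hau]
      ring
    have hderiv : HasDerivAt (fun s : ℝ => x i + (s * T⁻¹) • (max (⟪a, x i⟫ + b) 0 • u))
        (T⁻¹ • (max (⟪a, x i⟫ + b) 0 • u)) t :=
      ((hasDerivAt_mul_const (T⁻¹)).smul_const _).const_add _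
    have heq : max (⟪a, x i + (t * T⁻¹) • (max (⟪a, x i⟫ + b) 0 • u)⟫ + b) 0 • (T⁻¹ • u)
        = T⁻¹ • (max (⟪a, x i⟫ + b) 0 • u) := by
      rw [hin, smul_comm]
    rw [show (inner ℝ a (x i + (t * T⁻¹) • (max (⟪a, x i⟫ + b) 0 • u)) : ℝ)
        = ⟪a, x i + (t * T⁻¹) • (max (⟪a, x i⟫ + b) 0 • u)⟫ from rfl, heq]
    exact hderiv.hasDerivWithinAt
  · intro i; simp
  · intro i
    simp only [mul_inv_cancel₀ hT.ne', one_smul]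

lemma reach_refl {T : ℝ} (hT : 0 < T) (x : Fin N → EuclideanSpace ℝ (Fin d)) :
    Reach d N T x x := by
  have h := reach_shear hT (0 : EuclideanSpace ℝ (Fin d)) 0 0 (inner_zero_right _) x
  simpa using h

/-- Gluing of piecewise-constant controls. -/
lemma pcon_glue {α : Type*} {f₁ f₂ : ℝ → α} {T₁ T₂ : ℝ} {S₁ S₂ : Finset ℝ}
    (h₁ : PCOn f₁ T₁ S₁) (h₂ : PCOn f₂ T₂ S₂) :
    PCOn (fun t => if t < T₁ then f₁ t else f₂ (t - T₁)) (T₁ + T₂)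
      (S₁ ∪ S₂.image (· + T₁) ∪ {T₁}) := by
  intro t₁ ht₁ t₂ ht₂ hle hS
  have hT₁ : T₁ ∉ Set.Ioc t₁ t₂ := hS T₁ (by simp)
  rcases lt_or_ge t₂ T₁ with h2 | h2
  · have h1 : t₁ < T₁ := lt_of_le_of_lt hle h2
    simp only [if_pos h1, if_pos h2]
    exact h₁ t₁ ⟨ht₁.1, h1.le⟩ t₂ ⟨ht₂.1, h2.le⟩ hle
      (fun s hs => hS s (by simp [Finset.mem_union, hs]))
  · rcases lt_or_ge t₁ T₁ with h1 | h1
    · exact absurd ⟨h1, h2⟩ hT₁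
    · simp only [if_neg (not_lt.mpr h1), if_neg (not_lt.mpr (le_trans h1 hle))]
      refine h₂ (t₁ - T₁) ⟨by linarith, by linarith [ht₁.2]⟩
        (t₂ - T₁) ⟨by linarith, by linarith [ht₂.2]⟩ (by linarith) ?_
      intro s hs hmem
      refine hS (s + T₁) ?_ ⟨by linarith [hmem.1], by linarith [hmem.2]⟩
      simp only [Finset.mem_union, Finset.mem_image]
      exact Or.inl (Or.inr ⟨s, hs, rfl⟩)

/-- Composition of reachability. -/
lemma reach_comp {T₁ T₂ : ℝ} (h₁ : 0 < T₁) (h₂ : 0 < T₂)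
    {x y z : Fin N → EuclideanSpace ℝ (Fin d)}
    (H₁ : Reach d N T₁ x y) (H₂ : Reach d N T₂ y z) : Reach d N (T₁ + T₂) x z := by
  obtain ⟨w₁, a₁, b₁, S₁, pw₁, pa₁, pb₁, X₁, hc₁, hd₁, h0₁, hT₁⟩ := H₁
  obtain ⟨w₂, a₂, b₂, S₂, pw₂, pa₂, pb₂, X₂, hc₂, hd₂, h0₂, hT₂⟩ := H₂
  refine ⟨fun t => if t < T₁ then w₁ t else w₂ (t - T₁),
    fun t => if t < T₁ then a₁ t else a₂ (t - T₁),
    fun t => if t < T₁ then b₁ t else b₂ (t - T₁),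
    S₁ ∪ S₂.image (· + T₁) ∪ {T₁},
    pcon_glue pw₁ pw₂, pcon_glue pa₁ pa₂, pcon_glue pb₁ pb₂,
    fun i t => if t ≤ T₁ then X₁ i (min t T₁) else X₂ i (max (t - T₁) 0),
    ?_, ?_, ?_, ?_⟩
  · intro i
    apply ContinuousOn.if
    · intro t ht
      have hfr : t = T₁ := by
        have h2 := ht.2
        rw [show {a : ℝ | a ≤ T₁} = Set.Iic T₁ from rfl, frontier_Iic] at h2
        exact h2
      subst hfr
      simp only [min_self, sub_self, max_self]
      rw [hT₁ i, h0₂ i]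
    · refine ContinuousOn.mono ?_ Set.inter_subset_left
      refine (hc₁ i).comp (Continuous.continuousOn
        (continuous_id.min continuous_const)) ?_
      intro t ht
      exact ⟨le_min ht.1 h₁.le, min_le_right _ _⟩
    · refine ContinuousOn.mono ?_ Set.inter_subset_left
      refine (hc₂ i).comp (Continuous.continuousOn
        ((continuous_id.sub continuous_const).max continuous_const)) ?_
      intro t ht
      exact ⟨le_max_right _ _, max_le (by linarith [ht.2]) h₂.le⟩
  · intro i t ht htS
    have hT₁S : t ≠ T₁ := by
      intro h; exact htS (by simp [h])
    rcases lt_or_ge t T₁ with hlt | hge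
    · -- left piece
      have ht₁ : t ∈ Set.Icc (0:ℝ) T₁ := ⟨ht.1, hlt.le⟩
      have htS₁ : t ∉ S₁ := fun h => htS (by simp [h])
      have hD := hd₁ i t ht₁ htS₁
      have hset : Set.Icc (0:ℝ) T₁ =ᶠ[nhds t] Set.Icc (0:ℝ) (T₁ + T₂) := by
        rw [Filter.eventuallyEq_set]
        filter_upwards [(isOpen_lt continuous_id continuous_const).mem_nhds hlt] with s hs
        have hs' : s < T₁ := hs
        simp only [Set.mem_Icc]
        constructor
        · rintro ⟨ha, _⟩; exact ⟨ha, by linarith⟩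
        · rintro ⟨ha, _⟩; exact ⟨ha, hs'.le⟩
      have hD2 : HasDerivWithinAt (X₁ i)
          (max (⟪a₁ t, X₁ i t⟫ + b₁ t) 0 • w₁ t) (Set.Icc 0 (T₁ + T₂)) t :=
        hD.congr_set hset
      have hfun : (fun s => if s ≤ T₁ then X₁ i (min s T₁) else X₂ i (max (s - T₁) 0))
          =ᶠ[nhds t] X₁ i := by
        filter_upwards [(isOpen_lt continuous_id continuous_const).mem_nhds hlt] with s hs
        have hs' : s < T₁ := hs
        rw [if_pos hs'.le, min_eq_left hs'.le]
      have hXt : (if t ≤ T₁ then X₁ i (min t T₁) else X₂ i (max (t - T₁) 0)) = X₁ i t := by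
        rw [if_pos hlt.le, min_eq_left hlt.le]
      have hD3 := hD2.congr_of_eventuallyEq
        (hfun.filter_mono nhdsWithin_le_nhds) hXt
      simpa only [if_pos hlt, hXt] using hD3
    · -- right piece
      have hgt : T₁ < t := lt_of_le_of_ne hge (Ne.symm hT₁S)
      have ht₂ : t - T₁ ∈ Set.Icc (0:ℝ) T₂ := ⟨by linarith, by linarith [ht.2]⟩
      have htS₂ : t - T₁ ∉ S₂ := by
        intro h
        refine htS ?_
        simp only [Finset.mem_union, Finset.mem_image]
        exact Or.inl (Or.inr ⟨t - T₁, h, by ring⟩)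
      have hD := hd₂ i (t - T₁) ht₂ htS₂
      have hg : HasDerivWithinAt (fun s : ℝ => s - T₁) 1 (Set.Icc T₁ (T₁ + T₂)) t :=
        ((hasDerivAt_id t).sub_const T₁).hasDerivWithinAt
      have hmaps : Set.MapsTo (fun s : ℝ => s - T₁) (Set.Icc T₁ (T₁ + T₂))
          (Set.Icc 0 T₂) := by
        intro s hs
        simp only [Set.mem_Icc] at hs ⊢
        constructor <;> linarith
      have hcomp := hD.scomp t hg hmaps
      have hset : Set.Icc T₁ (T₁ + T₂) =ᶠ[nhds t] Set.Icc (0:ℝ) (T₁ + T₂) := by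
        rw [Filter.eventuallyEq_set]
        filter_upwards [(isOpen_lt continuous_const continuous_id).mem_nhds hgt] with s hs
        have hs' : T₁ < s := hs
        simp only [Set.mem_Icc]
        constructor
        · rintro ⟨_, hb⟩; exact ⟨by linarith, hb⟩
        · rintro ⟨_, hb⟩; exact ⟨hs'.le, hb⟩
      have hD2 : HasDerivWithinAt (fun s => X₂ i (s - T₁))
          ((1:ℝ) • max (⟪a₂ (t - T₁), X₂ i (t - T₁)⟫ + b₂ (t - T₁)) 0 • w₂ (t - T₁))
          (Set.Icc 0 (T₁ + T₂)) t := hcomp.congr_set hset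
      rw [one_smul] at hD2
      have hfun : (fun s => if s ≤ T₁ then X₁ i (min s T₁) else X₂ i (max (s - T₁) 0))
          =ᶠ[nhds t] (fun s => X₂ i (s - T₁)) := by
        filter_upwards [(isOpen_lt continuous_const continuous_id).mem_nhds hgt] with s hs
        have hs' : T₁ < s := hs
        rw [if_neg (not_le.mpr hs'), max_eq_left (by linarith)]
      have hXt : (if t ≤ T₁ then X₁ i (min t T₁) else X₂ i (max (t - T₁) 0))
          = X₂ i (t - T₁) := by
        rw [if_neg (not_le.mpr hgt), max_eq_left (by linarith)]
      have hD3 := hD2.congr_of_eventuallyEq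
        (hfun.filter_mono nhdsWithin_le_nhds) hXt
      simpa only [if_neg (not_lt.mpr hge), hXt] using hD3
  · intro i
    simp only [if_pos h₁.le, min_eq_left h₁.le]
    exact h0₁ i
  · intro i
    simp only [if_neg (by linarith : ¬ (T₁ + T₂ ≤ T₁)), max_eq_left
      (by linarith : (0:ℝ) ≤ T₁ + T₂ - T₁), add_sub_cancel_left, max_eq_left h₂.le]
    exact hT₂ i

/-- Tent-function cancellation away from the center. -/
lemma tent_zero {V : Type*} [AddCommGroup V] [Module ℝ V] {c ε : ℝ}
    (hε : 0 < ε) (h : ε ≤ |c|) (u : V) :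
    max (c + ε) 0 • u + max c 0 • ((-2:ℝ) • u) + max (c - ε) 0 • u = 0 := by
  rcases le_abs.mp h with hc | hc
  · rw [max_eq_left (by linarith), max_eq_left (by linarith), max_eq_left (by linarith)]
    rw [smul_smul]
    rw [← add_smul, ← add_smul]
    have : c + ε + c * -2 + (c - ε) = 0 := by ring
    rw [this, zero_smul]
  · rw [max_eq_right (by linarith), max_eq_right (by linarith), max_eq_right (by linarith)]
    simp

/-- Move a single point of the configuration, fixing all others. -/
lemma reach_move_one {T : ℝ} (hT : 0 < T) (a : EuclideanSpace ℝ (Fin d))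
    (p : Fin N → EuclideanSpace ℝ (Fin d)) (i : Fin N) (v : EuclideanSpace ℝ (Fin d))
    (hv : ⟪a, v⟫ = 0) (hsep : ∀ j, j ≠ i → ⟪a, p j⟫ ≠ ⟪a, p i⟫) :
    Reach d N T p (Function.update p i (p i + v)) := by
  obtain ⟨ε, hε, hεle⟩ : ∃ ε : ℝ, 0 < ε ∧ ∀ j, j ≠ i → ε ≤ |⟪a, p j⟫ - ⟪a, p i⟫| := by
    classical
    set F := (Finset.univ.erase i).image (fun j => |⟪a, p j⟫ - ⟪a, p i⟫|) with hF
    by_cases hFne : F.Nonempty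
    · refine ⟨F.min' hFne, ?_, ?_⟩
      · obtain ⟨j, hj, hjeq⟩ := Finset.mem_image.mp (F.min'_mem hFne)
        rw [← hjeq]
        exact abs_pos.mpr (sub_ne_zero.mpr (hsep j (Finset.ne_of_mem_erase hj)))
      · intro j hj
        exact F.min'_le _ (Finset.mem_image.mpr
          ⟨j, Finset.mem_erase.mpr ⟨hj, Finset.mem_univ j⟩, rfl⟩)
    · refine ⟨1, one_pos, fun j hj => absurd ?_ hFne⟩
      exact ⟨_, Finset.mem_image.mpr ⟨j, Finset.mem_erase.mpr ⟨hj, Finset.mem_univ j⟩, rfl⟩⟩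
  set u : EuclideanSpace ℝ (Fin d) := ε⁻¹ • v with hu
  have hau : ⟪a, u⟫ = 0 := by rw [hu, real_inner_smul_right, hv, mul_zero]
  have hau₂ : ⟪a, ((-2:ℝ) • u)⟫ = 0 := by rw [real_inner_smul_right, hau, mul_zero]
  have h1 := reach_shear (by positivity : (0:ℝ) < T/2) a u (ε - ⟪a, p i⟫) hau p
  set q1 : Fin N → EuclideanSpace ℝ (Fin d) :=
    fun j => p j + max (⟪a, p j⟫ + (ε - ⟪a, p i⟫)) 0 • u with hq1def
  have hq1 : ∀ j, ⟪a, q1 j⟫ = ⟪a, p j⟫ := by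
    intro j
    show ⟪a, p j + max (⟪a, p j⟫ + (ε - ⟪a, p i⟫)) 0 • u⟫ = ⟪a, p j⟫
    rw [inner_add_right, real_inner_smul_right, hau, mul_zero, add_zero]
  have h2 := reach_shear (by positivity : (0:ℝ) < T/4) a ((-2:ℝ) • u) (- ⟪a, p i⟫) hau₂ q1
  set q2 : Fin N → EuclideanSpace ℝ (Fin d) :=
    fun j => q1 j + max (⟪a, q1 j⟫ + (- ⟪a, p i⟫)) 0 • ((-2:ℝ) • u) with hq2def
  have hq2 : ∀ j, ⟪a, q2 j⟫ = ⟪a, p j⟫ := by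
    intro j
    show ⟪a, q1 j + max (⟪a, q1 j⟫ + (- ⟪a, p i⟫)) 0 • ((-2:ℝ) • u)⟫ = ⟪a, p j⟫
    rw [inner_add_right, real_inner_smul_right, hau₂, mul_zero, add_zero, hq1]
  have h3 := reach_shear (by positivity : (0:ℝ) < T/4) a u (-ε - ⟪a, p i⟫) hau q2
  set q3 : Fin N → EuclideanSpace ℝ (Fin d) :=
    fun j => q2 j + max (⟪a, q2 j⟫ + (-ε - ⟪a, p i⟫)) 0 • u with hq3def
  have hcomp := reach_comp (by positivity) (by positivity) h1
    (reach_comp (by positivity) (by positivity) h2 h3)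
  rw [show T/2 + (T/4 + T/4) = T by ring] at hcomp
  have hfin : q3 = Function.update p i (p i + v) := by
    funext j
    have hval : q3 j = p j + (max ((⟪a, p j⟫ - ⟪a, p i⟫) + ε) 0 • u
        + max (⟪a, p j⟫ - ⟪a, p i⟫) 0 • ((-2:ℝ) • u)
        + max ((⟪a, p j⟫ - ⟪a, p i⟫) - ε) 0 • u) := by
      show q2 j + max (⟪a, q2 j⟫ + (-ε - ⟪a, p i⟫)) 0 • u = _
      rw [hq2 j]
      show (q1 j + max (⟪a, q1 j⟫ + (- ⟪a, p i⟫)) 0 • ((-2:ℝ) • u))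
          + max (⟪a, p j⟫ + (-ε - ⟪a, p i⟫)) 0 • u = _
      rw [hq1 j]
      show ((p j + max (⟪a, p j⟫ + (ε - ⟪a, p i⟫)) 0 • u)
          + max (⟪a, p j⟫ + (- ⟪a, p i⟫)) 0 • ((-2:ℝ) • u))
          + max (⟪a, p j⟫ + (-ε - ⟪a, p i⟫)) 0 • u = _
      rw [show ⟪a, p j⟫ + (ε - ⟪a, p i⟫) = (⟪a, p j⟫ - ⟪a, p i⟫) + ε by ring,
        show ⟪a, p j⟫ + (- ⟪a, p i⟫) = ⟪a, p j⟫ - ⟪a, p i⟫ by ring,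
        show ⟪a, p j⟫ + (-ε - ⟪a, p i⟫) = (⟪a, p j⟫ - ⟪a, p i⟫) - ε by ring]
      abel
    by_cases hj : j = i
    · subst hj
      rw [Function.update_self, hval]
      rw [sub_self, zero_add, zero_sub, max_eq_left hε.le, max_self,
        max_eq_right (by linarith)]
      rw [zero_smul, zero_smul, add_zero, add_zero, hu, smul_smul,
        mul_inv_cancel₀ hε.ne', one_smul]
    · rw [Function.update_of_ne hj, hval, tent_zero hε (hεle j hj) u, add_zero]
  rw [← hfin]
  exact hcomp

/-- Move all points of the configuration within the fibers of `⟪a, ·⟫`. -/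
lemma reach_move_all (a : EuclideanSpace ℝ (Fin d)) (p v : Fin N → EuclideanSpace ℝ (Fin d))
    (hv : ∀ i, ⟪a, v i⟫ = 0) (hsep : ∀ i j, i ≠ j → ⟪a, p i⟫ ≠ ⟪a, p j⟫) :
    ∀ T : ℝ, 0 < T → Reach d N T p (fun i => p i + v i) := by
  have key : ∀ k : ℕ, ∀ T : ℝ, 0 < T →
      Reach d N T p (fun i => p i + if (i : ℕ) < k then v i else 0) := by
    intro k
    induction k with
    | zero =>
      intro T hT
      simpa using reach_refl hT p
    | succ k ih =>
      intro T hT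
      by_cases hk : k < N
      · have h1 := ih (T/2) (by positivity)
        set q : Fin N → EuclideanSpace ℝ (Fin d) :=
          fun i => p i + if (i : ℕ) < k then v i else 0 with hq
        have hqa : ∀ m, ⟪a, q m⟫ = ⟪a, p m⟫ := by
          intro m
          show ⟪a, p m + if (m : ℕ) < k then v m else 0⟫ = ⟪a, p m⟫
          rw [inner_add_right]
          split
          · rw [hv m, add_zero]
          · rw [inner_zero_right, add_zero]
        have hsep' : ∀ j, j ≠ (⟨k, hk⟩ : Fin N) → ⟪a, q j⟫ ≠ ⟪a, q ⟨k, hk⟩⟫ := by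
          intro j hj
          rw [hqa, hqa]
          exact hsep j _ hj
        have h2 := reach_move_one (by positivity : (0:ℝ) < T/2) a q ⟨k, hk⟩
          (v ⟨k, hk⟩) (hv _) hsep'
        have hcomp := reach_comp (by positivity) (by positivity) h1 h2
        rw [show T/2 + T/2 = T by ring] at hcomp
        have hupd : Function.update q ⟨k, hk⟩ (q ⟨k, hk⟩ + v ⟨k, hk⟩)
            = (fun i => p i + if (i : ℕ) < k + 1 then v i else 0) := by
          funext j
          by_cases hj : j = (⟨k, hk⟩ : Fin N)
          · subst hj
            rw [Function.update_self]
            show (p _ + if (k : ℕ) < k then v _ else 0) + v _ = p _ + _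
            rw [if_neg (lt_irrefl k), if_pos (Nat.lt_succ_self k), add_zero]
          · rw [Function.update_of_ne hj]
            show p j + (if (j : ℕ) < k then v j else 0) = p j + _
            have hne : (j : ℕ) ≠ k := fun h => hj (Fin.ext h)
            have hiff : ((j : ℕ) < k + 1) = ((j : ℕ) < k) := by
              simp only [eq_iff_iff, Nat.lt_succ_iff_lt_or_eq, hne, or_false]
            simp only [hiff]
        rw [← hupd]
        exact hcomp
      · have heq : (fun i : Fin N => p i + if (i : ℕ) < k + 1 then v i else 0)
            = (fun i => p i + if (i : ℕ) < k then v i else 0) := by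
          funext j
          have hlt : (j : ℕ) < k := lt_of_lt_of_le j.isLt (not_lt.mp hk)
          rw [if_pos hlt, if_pos (Nat.lt_succ_of_lt hlt)]
        rw [heq]
        exact ih T hT
  intro T hT
  have h := key N T hT
  simpa using h

end SparseAux

open SparseAux in
open scoped RealInnerProductSpace in
/-- **Sparse simultaneous control** (Remark on sparsity).
With only `2d+1` scalar controls — vectors `w(t), a(t) ∈ ℝ^d` and a scalar
`b(t)`, all piecewise constant — the rank-one neural ODE
`ẋ = w(t) σ(⟨a(t), x⟩ + b(t))` (ReLU `σ`) drives any `N` pairwise distinct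
points exactly onto any `N` pairwise distinct targets in time `T`. -/
theorem sparse_simultaneous_control
    (d N : ℕ) (hd : 2 ≤ d) (T : ℝ) (hT : 0 < T)
    (x z : Fin N → EuclideanSpace ℝ (Fin d))
    (hx : Function.Injective x) (hz : Function.Injective z) :
    ∃ (w a : ℝ → EuclideanSpace ℝ (Fin d)) (b : ℝ → ℝ) (S : Finset ℝ),
      PCOn w T S ∧ PCOn a T S ∧ PCOn b T S ∧
      ∃ X : Fin N → ℝ → EuclideanSpace ℝ (Fin d),
        (∀ i, ContinuousOn (X i) (Set.Icc 0 T)) ∧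
        (∀ i, ∀ t ∈ Set.Icc (0:ℝ) T, t ∉ S →
          HasDerivWithinAt (X i)
            ((max ((inner ℝ (a t) (X i t) : ℝ) + b t) 0) • w t) (Set.Icc 0 T) t) ∧
        (∀ i, X i 0 = x i) ∧
        (∀ i, X i T = z i) := by
  classical
  haveI : Nonempty (Fin d) := ⟨⟨0, by omega⟩⟩
  -- Step 1: choose a direction `a` separating both configurations.
  obtain ⟨a, ha0, hax, haz⟩ :
      ∃ a : EuclideanSpace ℝ (Fin d), a ≠ 0 ∧
        (∀ i j, i ≠ j → ⟪a, x i⟫ ≠ ⟪a, x j⟫) ∧ (∀ i j, i ≠ j → ⟪a, z i⟫ ≠ ⟪a, z j⟫) := by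
    set P : ((Fin N × Fin N × Bool) ⊕ Unit) → Submodule ℝ (EuclideanSpace ℝ (Fin d)) :=
      Sum.elim (fun t =>
        if t.1 = t.2.1 then ⊥
        else (ℝ ∙ ((cond t.2.2 x z) t.1 - (cond t.2.2 x z) t.2.1))ᗮ)
        (fun _ => ⊥) with hP
    have hPne : ∀ idx, P idx ≠ ⊤ := by
      rintro (⟨i, j, bb⟩ | _)
      · by_cases hij : i = j
        · simp only [hP, Sum.elim_inl, if_pos hij]
          exact bot_ne_top
        · simp only [hP, Sum.elim_inl, if_neg hij]
          intro htop
          have hne : (cond bb x z) i - (cond bb x z) j ≠ 0 := by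
            cases bb
            · exact sub_ne_zero.mpr (fun h => hij (hz h))
            · exact sub_ne_zero.mpr (fun h => hij (hx h))
          have hmem : ((cond bb x z) i - (cond bb x z) j) ∈
              (ℝ ∙ ((cond bb x z) i - (cond bb x z) j))ᗮ := by
            rw [htop]; trivial
          rw [Submodule.mem_orthogonal_singleton_iff_inner_right] at hmem
          exact hne (inner_self_eq_zero.mp hmem)
      · exact bot_ne_top
    have hcover : (⋃ idx, (P idx : Set (EuclideanSpace ℝ (Fin d)))) ≠ Set.univ := by
      intro h
      obtain ⟨idx, hidx⟩ := Subspace.exists_eq_top_of_iUnion_eq_univ h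
      exact hPne idx hidx
    obtain ⟨a, ha⟩ := Set.ne_univ_iff_exists_notMem _ |>.mp hcover
    simp only [Set.mem_iUnion, not_exists] at ha
    refine ⟨a, ?_, ?_, ?_⟩
    · intro h
      exact ha (Sum.inr ()) (by simp [hP, h])
    · intro i j hij heq
      refine ha (Sum.inl (i, j, true)) ?_
      simp only [hP, Sum.elim_inl, if_neg hij]
      rw [SetLike.mem_coe, Submodule.mem_orthogonal_singleton_iff_inner_right,
        real_inner_comm, inner_sub_right]
      show ⟪a, x i⟫ - ⟪a, x j⟫ = 0
      rw [heq, sub_self]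
    · intro i j hij heq
      refine ha (Sum.inl (i, j, false)) ?_
      simp only [hP, Sum.elim_inl, if_neg hij]
      rw [SetLike.mem_coe, Submodule.mem_orthogonal_singleton_iff_inner_right,
        real_inner_comm, inner_sub_right]
      show ⟪a, z i⟫ - ⟪a, z j⟫ = 0
      rw [heq, sub_self]
  have had : ⟪a, a⟫ ≠ 0 := fun h => ha0 (inner_self_eq_zero.mp h)
  -- Step 2: choose a nonzero direction `a'` orthogonal to `a`.
  obtain ⟨a', ha'mem, ha'0⟩ : ∃ a', a' ∈ (ℝ ∙ a)ᗮ ∧ a' ≠ 0 := by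
    have hne : (ℝ ∙ a)ᗮ ≠ ⊥ := by
      intro h
      have htop : (ℝ ∙ a) = ⊤ := Submodule.orthogonal_eq_bot_iff.mp h
      have h1 : Module.finrank ℝ (ℝ ∙ a : Submodule ℝ (EuclideanSpace ℝ (Fin d))) = 1 :=
        finrank_span_singleton ha0
      rw [htop, finrank_top, finrank_euclideanSpace_fin] at h1
      omega
    exact Submodule.exists_mem_ne_zero_of_ne_bot hne
  have haa' : ⟪a, a'⟫ = 0 := Submodule.mem_orthogonal_singleton_iff_inner_right.mp ha'mem
  have ha'a : ⟪a', a⟫ = 0 := by rw [real_inner_comm]; exact haa'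
  have ha'd : ⟪a', a'⟫ ≠ 0 := fun h => ha'0 (inner_self_eq_zero.mp h)
  -- Intermediate configurations.
  set y : Fin N → EuclideanSpace ℝ (Fin d) :=
    fun i => (⟪a, x i⟫ / ⟪a, a⟫) • a + (((i : ℕ) : ℝ) + 1) • a' with hy
  set y' : Fin N → EuclideanSpace ℝ (Fin d) :=
    fun i => (⟪a, z i⟫ / ⟪a, a⟫) • a + (((i : ℕ) : ℝ) + 1) • a' with hy'
  have hya : ∀ i, ⟪a, y i⟫ = ⟪a, x i⟫ := by
    intro i
    show ⟪a, (⟪a, x i⟫ / ⟪a, a⟫) • a + (((i : ℕ) : ℝ) + 1) • a'⟫ = _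
    rw [inner_add_right, real_inner_smul_right, real_inner_smul_right, haa',
      div_mul_cancel₀ _ had, mul_zero, add_zero]
  have hy'a : ∀ i, ⟪a, y' i⟫ = ⟪a, z i⟫ := by
    intro i
    show ⟪a, (⟪a, z i⟫ / ⟪a, a⟫) • a + (((i : ℕ) : ℝ) + 1) • a'⟫ = _
    rw [inner_add_right, real_inner_smul_right, real_inner_smul_right, haa',
      div_mul_cancel₀ _ had, mul_zero, add_zero]
  have hya' : ∀ i, ⟪a', y i⟫ = (((i : ℕ) : ℝ) + 1) * ⟪a', a'⟫ := by
    intro i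
    show ⟪a', (⟪a, x i⟫ / ⟪a, a⟫) • a + (((i : ℕ) : ℝ) + 1) • a'⟫ = _
    rw [inner_add_right, real_inner_smul_right, real_inner_smul_right, ha'a, mul_zero,
      zero_add]
  have hy'a' : ∀ i, ⟪a', y' i⟫ = (((i : ℕ) : ℝ) + 1) * ⟪a', a'⟫ := by
    intro i
    show ⟪a', (⟪a, z i⟫ / ⟪a, a⟫) • a + (((i : ℕ) : ℝ) + 1) • a'⟫ = _
    rw [inner_add_right, real_inner_smul_right, real_inner_smul_right, ha'a, mul_zero,
      zero_add]
  -- Phase 1.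
  have hP1 : Reach d N (T/2) x y := by
    have h := reach_move_all a x (fun i => y i - x i)
      (fun i => by rw [inner_sub_right, hya i, sub_self]) hax (T/2) (by positivity)
    have heq : (fun i => x i + (y i - x i)) = y := funext fun i => by abel
    rwa [heq] at h
  -- Phase 2.
  have hP2 : Reach d N (T/4) y y' := by
    have h := reach_move_all a' y (fun i => y' i - y i)
      (fun i => by rw [inner_sub_right, hya' i, hy'a' i, sub_self])
      (fun i j hij => by
        rw [hya' i, hya' j]
        intro h
        have h2 : (((i : ℕ) : ℝ) + 1) = (((j : ℕ) : ℝ) + 1) := mul_right_cancel₀ ha'd h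
        have h3 : ((i : ℕ) : ℝ) = ((j : ℕ) : ℝ) := by linarith
        exact hij (Fin.ext (Nat.cast_injective h3)))
      (T/4) (by positivity)
    have heq : (fun i => y i + (y' i - y i)) = y' := funext fun i => by abel
    rwa [heq] at h
  -- Phase 3.
  have hP3 : Reach d N (T/4) y' z := by
    have h := reach_move_all a y' (fun i => z i - y' i)
      (fun i => by rw [inner_sub_right, hy'a i, sub_self])
      (fun i j hij => by rw [hy'a i, hy'a j]; exact haz i j hij)
      (T/4) (by positivity)
    have heq : (fun i => y' i + (z i - y' i)) = z := funext fun i => by abel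
    rwa [heq] at h
  have hfinal := reach_comp (by positivity) (by positivity) hP1
    (reach_comp (by positivity) (by positivity) hP2 hP3)
  rw [show T/2 + (T/4 + T/4) = T by ring] at hfinal
  exact hfinal
end
end

section
/- (Preparation of the dataset.) Let d ≥ 2 and let {x_i}_{i=1}^N ⊂ ℝ^d be pairwise distinct points. Then there exist τ > 0 and piecewise constant controls A, W : [0,τ] → ℝ^{d×d} and b : [0,τ] → ℝ^d such that the flow of the Neural ODE satisfies φ_τ(x_i; A, W, b)^{(1)} ≠ φ_τ(x_j; A, W, b)^{(1)} for all i ≠ j; i.e., after the controlled evolution all the points have pairwise distinct first coordinates (and, by injectivity of the flow, remain pairwise distinct). -/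
open MeasureTheory Set

noncomputable section

lemma exists_good_w {d N : ℕ} [NeZero d] (x : Fin N → EuclideanSpace ℝ (Fin d))
    (hx : Function.Injective x) :
    ∃ w : EuclideanSpace ℝ (Fin d), w 0 ≠ 0 ∧
      ∀ i j : Fin N, i ≠ j → (∑ k, w k * (x i k - x j k)) ≠ 0 := by
  have key : ∀ u : EuclideanSpace ℝ (Fin d), u ≠ 0 →
      volume {w : EuclideanSpace ℝ (Fin d) | ∑ k, w k * u k = 0} = 0 := by
    intro u hu
    have heq : {w : EuclideanSpace ℝ (Fin d) | ∑ k, w k * u k = 0}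
        = (LinearMap.ker ((innerSL ℝ) u).toLinearMap : Set (EuclideanSpace ℝ (Fin d))) := by
      ext w
      simp [LinearMap.mem_ker, PiLp.inner_apply, RCLike.inner_apply, mul_comm]
    rw [heq]
    refine Measure.addHaar_submodule _ _ ?_
    intro htop
    have hmem : u ∈ LinearMap.ker ((innerSL ℝ) u).toLinearMap := htop ▸ Submodule.mem_top
    have h2 : (inner ℝ u u : ℝ) = 0 := hmem
    exact hu (inner_self_eq_zero.mp h2)
  set bad : Set (EuclideanSpace ℝ (Fin d)) :=
    {w | ∑ k, w k * (EuclideanSpace.single (0 : Fin d) (1:ℝ)) k = 0} ∪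
      ⋃ p : Fin N × Fin N, {w | p.1 ≠ p.2 ∧ ∑ k, w k * (x p.1 k - x p.2 k) = 0} with hbad
  have hbad0 : volume bad = 0 := by
    rw [hbad]
    refine measure_union_null ?_ (measure_iUnion_null ?_)
    · exact key _ (by
        intro h
        have := congrArg (fun v : EuclideanSpace ℝ (Fin d) => v 0) h
        simp [EuclideanSpace.single_apply] at this)
    · rintro ⟨i, j⟩
      by_cases hij : i = j
      · simp [hij]
      · refine measure_mono_null ?_ (key (x i - x j) (sub_ne_zero.2 (fun h => hij (hx h))))
        intro w hw
        simpa using hw.2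
  have huniv : volume (univ : Set (EuclideanSpace ℝ (Fin d))) ≠ 0 :=
    (isOpen_univ.measure_pos volume univ_nonempty).ne'
  have hne : bad ≠ univ := fun h => huniv (h ▸ hbad0)
  obtain ⟨w, hw⟩ := (Set.ne_univ_iff_exists_notMem _).1 hne
  rw [hbad, Set.mem_union, not_or] at hw
  refine ⟨w, ?_, ?_⟩
  · intro h
    apply hw.1
    simp only [Set.mem_setOf_eq, EuclideanSpace.single_apply]
    rw [Finset.sum_eq_single 0] <;> simp_all
  · intro i j hij hsum
    apply hw.2
    rw [Set.mem_iUnion]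
    exact ⟨(i, j), hij, hsum⟩

/-- **Preparation of the dataset** (Step 1 of the proof of Theorem 1).
Given pairwise distinct points in `ℝ^d` (`d ≥ 2`), there is a time `τ > 0` and
piecewise constant controls such that after the controlled neural-ODE evolution
all the points have pairwise distinct first coordinates. -/
theorem dataset_preparation
    (d N : ℕ) (hd : 2 ≤ d)
    (x : Fin N → EuclideanSpace ℝ (Fin d)) (hx : Function.Injective x) :
    ∃ τ : ℝ, 0 < τ ∧
      ∃ (A W : ℝ → Matrix (Fin d) (Fin d) ℝ) (b : ℝ → EuclideanSpace ℝ (Fin d))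
        (S : Finset ℝ),
        PCOn A τ S ∧ PCOn W τ S ∧ PCOn b τ S ∧
        ∃ X : Fin N → ℝ → EuclideanSpace ℝ (Fin d),
          (∀ i, SolvesNODE A W b τ S (X i)) ∧
          (∀ i, X i 0 = x i) ∧
          (∀ i j, i ≠ j → X i τ ⟨0, by omega⟩ ≠ X j τ ⟨0, by omega⟩) := by
  haveI : NeZero d := ⟨by omega⟩
  obtain ⟨w, hw0, hw⟩ := exists_good_w x hx
  set v : EuclideanSpace ℝ (Fin d) :=
    WithLp.toLp 2 (fun k => w k / w 0 - if k = 0 then 1 else 0) with hvdef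
  have hv0 : v 0 = 0 := by simp [hvdef, div_self hw0]
  set g : Fin N → ℝ := fun i => ∑ k, v k * x i k with hg
  set B : ℝ := ∑ i, |g i| with hB
  have hBle : ∀ i, |g i| ≤ B := fun i =>
    Finset.single_le_sum (fun j _ => abs_nonneg (g j)) (Finset.mem_univ i)
  set c : Fin N → ℝ := fun i => g i + B with hc
  have hcpos : ∀ i, 0 ≤ c i := by
    intro i
    have := neg_abs_le (g i)
    have h2 := hBle i
    simp only [hc]
    linarith
  -- the trajectory of point i
  set X : Fin N → ℝ → EuclideanSpace ℝ (Fin d) :=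
    fun i t => x i + t • EuclideanSpace.single (0 : Fin d) (c i) with hX
  -- key sum computation
  have hsumv : ∀ i t, (∑ k, v k * (X i t) k) = g i := by
    intro i t
    simp only [hX, PiLp.add_apply, PiLp.smul_apply, smul_eq_mul,
      EuclideanSpace.single_apply, mul_add, Finset.sum_add_distrib, hg]
    have h2 : (∑ k, v k * (t * if k = (0:Fin d) then c i else 0)) = 0 := by
      rw [Finset.sum_eq_single 0]
      · simp [hv0]
      · intro k _ hk; simp [hk]
      · simp
    rw [h2, add_zero]
  refine ⟨1, one_pos,
    (fun _ => Matrix.of fun r j => if r = 0 then v j else 0),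
    (fun _ => Matrix.of fun r j => if r = 0 ∧ j = 0 then (1:ℝ) else 0),
    (fun _ => WithLp.toLp 2 (fun k => if k = 0 then B else 0)), ∅,
    fun _ _ _ _ _ _ => rfl, fun _ _ _ _ _ _ => rfl, fun _ _ _ _ _ _ => rfl,
    X, ?_, ?_, ?_⟩
  · -- SolvesNODE
    intro i
    constructor
    · exact (continuous_const.add
        ((continuous_id).smul continuous_const)).continuousOn
    · intro t ht _
      have hderiv : HasDerivWithinAt (X i)
          (EuclideanSpace.single (0 : Fin d) (c i)) (Set.Icc 0 1) t := by
        simpa [hX] using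
          (((hasDerivAt_id t).smul_const
            (EuclideanSpace.single (0 : Fin d) (c i))).const_add
            (x i)).hasDerivWithinAt
      convert hderiv using 1
      ext k
      simp only [mvec, reluVec, Matrix.of_apply, PiLp.add_apply, PiLp.toLp_apply,
        EuclideanSpace.single_apply]
      by_cases hk : k = 0
      · subst hk
        rw [Finset.sum_eq_single 0]
        · simp only [if_pos rfl, and_self, if_true, one_mul]
          rw [hsumv i t, show g i + B = c i from rfl, max_eq_left (hcpos i)]
        · intro j _ hj
          simp [hj]
        · simp
      · rw [Finset.sum_eq_zero, if_neg hk]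
        intro j _
        simp [hk]
  · intro i
    simp [hX]
  · intro i j hij
    have h0 : (⟨0, by omega⟩ : Fin d) = 0 := by
      ext; simp
    rw [h0]
    have hXval : ∀ m : Fin N, X m 1 0 = x m 0 + c m := by
      intro m
      simp [hX, EuclideanSpace.single_apply]
    rw [hXval i, hXval j]
    intro heq
    have hdiff : x i 0 - x j 0 + (g i - g j) = 0 := by
      simp only [hc] at heq
      linarith
    have hgij : g i - g j = ∑ k, v k * (x i k - x j k) := by
      simp [hg, mul_sub, Finset.sum_sub_distrib]
    have hvsum : ∑ k, v k * (x i k - x j k)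
        = (∑ k, w k * (x i k - x j k)) / w 0 - (x i 0 - x j 0) := by
      simp only [hvdef, sub_mul, Finset.sum_sub_distrib, Finset.sum_div]
      congr 1
      · exact Finset.sum_congr rfl fun k _ => div_mul_eq_mul_div _ _ _
      · rw [Finset.sum_eq_single 0]
        · simp
        · intro k _ hk; simp [hk]
        · simp
    rw [hgij, hvsum] at hdiff
    have : (∑ k, w k * (x i k - x j k)) / w 0 = 0 := by linarith
    exact hw i j hij (by
      rcases div_eq_zero_iff.mp this with h | h
      · exact h
      · exact absurd h hw0)
end
end
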